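/- Let α > 0, σ > 0 and ξ ∈ ℝ. Every complex root s of the quadratic equation s² + (α + σ - iξ)s - iαξ = 0 satisfies Re(s) ≤ 0; moreover if ξ ≠ 0 then Re(s) < 0. -/
import Mathlib
theorem pml_quadratic_roots_stable (α σ : ℝ) (hα : 0 < α) (hσ : 0 < σ) (ξ : ℝ) :
    ∀ s : ℂ, s ^ 2 + ((α : ℂ) + (σ : ℂ) - Complex.I * (ξ : ℂ)) * s
        - Complex.I * (α : ℂ) * (ξ : ℂ) = 0 →
      s.re ≤ 0 ∧ (ξ ≠ 0 → s.re < 0) := by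
  intro s hs
  rw [Complex.ext_iff] at hs
  obtain ⟨h1, h2⟩ := hs
  simp [pow_two, Complex.mul_re, Complex.mul_im, Complex.add_re, Complex.add_im,
    Complex.sub_re, Complex.sub_im, Complex.I_re, Complex.I_im, Complex.ofReal_re,
    Complex.ofReal_im] at h1 h2
  set x := s.re with hx
  set y := s.im with hy
  have hA : (x^2+y^2)*(x+α+σ) = α*ξ*y := by linear_combination x*h1 + y*h2
  have hB : y*((x+α)^2 + y^2 + α*σ) = ξ*((x+α)^2+y^2) := by
    linear_combination (-y)*h1 + (x+α)*h2
  have hC : (x^2+y^2)*(x+α+σ)*((x+α)^2+y^2) = α*y^2*((x+α)^2+y^2+α*σ) := by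
    linear_combination (((x+α)^2+y^2))*hA - (α*y)*hB
  have hle : x ≤ 0 := by
    by_contra hxp
    push_neg at hxp
    have hQ : 0 < (x+α)^2 + y^2 := by positivity
    have hs2 : 0 < x^2 + y^2 := by positivity
    have t1 : 0 < x*(((x+α)^2+y^2)*(x^2+y^2)) := mul_pos hxp (mul_pos hQ hs2)
    have t2 : 0 ≤ (α+σ)*(x^2*((x+α)^2+y^2)) := by positivity
    have t3 : 0 ≤ σ*(y^2*(x^2+2*α*x+y^2)) := by positivity
    nlinarith [hC, t1, t2, t3]
  refine ⟨hle, fun hξ => ?_⟩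
  rcases hle.lt_or_eq with h | h
  · exact h
  · exfalso
    have h4 : σ * y^4 = 0 := by
      linear_combination hC - (((x+α)^2+y^2)*(x^2+y^2) + (α+σ)*x*((x+α)^2+y^2)
        + σ*x*y^2 + 2*α*σ*y^2) * h
    have hy0 : y = 0 := by
      by_contra hyne
      have : 0 < σ * y^4 := by positivity
      linarith
    apply hξ
    have hα2 : (α:ℝ)^2 ≠ 0 := by positivity
    have : ξ * α^2 = 0 := by
      linear_combination (-1)*hB + (-ξ*(x+2*α))*h
        + (((x+α)^2+y^2+α*σ) - ξ*y)*hy0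
    exact (mul_eq_zero.mp this).resolve_right hα2
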